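/- Define F(n) = Σ_{π ∈ S_n} q^{(b-ca)(π)}. Then for n ≥ 1, F(n) = Σ_{k=1}^{n} a(n,k) F(n−k) with F(0) = 1, where a(n,k) = Σ_{n ≥ t_1 > ⋯ > t_k ≥ 1} Π_{j=1}^{k−1} (q^{t_j − t_{j+1} − 1} − 1). -/

import Mathlib

open Finset Polynomial

/-- A permutation of `Fin n` as a word `{0,...,n-1} → {1,...,n}`. -/
def toWord (n : ℕ) (π : Equiv.Perm (Fin n)) : ℕ → ℕ :=
  fun k => if h : k < n then (π ⟨k, h⟩ : ℕ) + 1 else 0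

/-- The number of occurrences of (b-ca) in a word of length `ℓ`:
triples (j,i,i+1) with j < i and w (i+1) < w j < w i. -/
def bcaCount (w : ℕ → ℕ) (ℓ : ℕ) : ℕ :=
  ((range ℓ ×ˢ range ℓ).filter
    (fun p => p.1 < p.2 ∧ p.2 + 1 < ℓ ∧ w (p.2 + 1) < w p.1 ∧ w p.1 < w p.2)).card

/-- `F n = Σ_{π ∈ S_n} q^{(b-ca)(π)}`. -/
noncomputable def F (n : ℕ) : Polynomial ℤ :=
  ∑ π : Equiv.Perm (Fin n), (X : Polynomial ℤ) ^ bcaCount (toWord n π) n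

/-- `a n k = Σ_{n ≥ t_1 > ⋯ > t_k ≥ 1} Π_{j=1}^{k-1} (q^{t_j - t_{j+1} - 1} - 1)`; the sum
ranges over k-element subsets `S = {t_1 > ⋯ > t_k}` of `{1,...,n}`, and if `L` is `S`
sorted increasingly then `t_j = L[k-j]` (0-based). -/
noncomputable def a (n k : ℕ) : Polynomial ℤ :=
  ∑ S ∈ (Finset.Icc 1 n).powersetCard k,
    ∏ j ∈ range (k - 1),
      ((X : Polynomial ℤ) ^
        ((S.sort (· ≤ ·)).getD (k - j - 1) 0 - (S.sort (· ≤ ·)).getD (k - j - 2) 0 - 1) - 1)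

noncomputable def H (n t : ℕ) : Polynomial ℤ :=
  ∑ π ∈ Finset.univ.filter (fun π : Equiv.Perm (Fin n) => toWord n π (n - 1) = t),
    (X : Polynomial ℤ) ^ bcaCount (toWord n π) n

noncomputable def gapProd (S : Finset ℕ) : Polynomial ℤ :=
  ∏ i ∈ range (S.card - 1),
    ((X : Polynomial ℤ) ^
      ((S.sort (· ≤ ·)).getD (i + 1) 0 - (S.sort (· ≤ ·)).getD i 0 - 1) - 1)

noncomputable def A (n k t : ℕ) : Polynomial ℤ :=
  ∑ S ∈ ((Finset.Icc 1 n).powersetCard k).filter (fun S => t ∈ S ∧ ∀ x ∈ S, t ≤ x),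
    gapProd S

lemma F_zero : F 0 = 1 := by
  rw [F]
  rw [Finset.sum_eq_single_of_mem (1 : Equiv.Perm (Fin 0)) (Finset.mem_univ _)]
  · simp [bcaCount]
  · intro b _ hb
    exact absurd (Subsingleton.elim b 1) hb

lemma F_eq_sum_H {n : ℕ} (hn : 1 ≤ n) : F n = ∑ t ∈ Icc 1 n, H n t := by
  rw [F]
  rw [← Finset.sum_fiberwise_of_maps_to (g := fun π : Equiv.Perm (Fin n) => toWord n π (n - 1))
      (t := Icc 1 n) ?_]
  · rfl
  · intro π _
    have h : n - 1 < n := by omega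
    simp only [toWord, dif_pos h, mem_Icc]
    have := (π ⟨n - 1, h⟩).isLt
    omega

lemma H_one : H 1 1 = 1 := by
  rw [H]
  rw [Finset.sum_eq_single_of_mem (1 : Equiv.Perm (Fin 1))]
  · simp [bcaCount]
  · simp [toWord]
  · intro b _ hb
    exact absurd (Subsingleton.elim b 1) hb

lemma bca_split (m : ℕ) (hm : 1 ≤ m) (w w' : ℕ → ℕ) (T : ℕ) (hT : 1 ≤ T)
    (hw : ∀ i, i < m → w i = w' i + (if T ≤ w' i then 1 else 0))
    (hwm : w m = T)
    (hmem : ∀ i, i < m → 1 ≤ w' i ∧ w' i ≤ m)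
    (hinj : ∀ i j, i < m → j < m → w' i = w' j → i = j)
    (hsurj : ∀ x, 1 ≤ x → x ≤ m → ∃ j, j < m ∧ w' j = x) :
    bcaCount w (m + 1) = bcaCount w' m + (w' (m - 1) - T) := by
  have key : ∀ i j, i < m → j < m → (w i < w j ↔ w' i < w' j) := by
    intro i j hi hj
    rw [hw i hi, hw j hj]
    split_ifs <;> omega
  have keyT : ∀ i, i < m → (T < w i ↔ T ≤ w' i) := by
    intro i hi
    rw [hw i hi]
    split_ifs <;> omega
  set P := ((range (m+1) ×ˢ range (m+1)).filter
    (fun p => p.1 < p.2 ∧ p.2 + 1 < m + 1 ∧ w (p.2 + 1) < w p.1 ∧ w p.1 < w p.2)) with hP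
  have h12 : #(P.filter (fun p : ℕ × ℕ => p.2 + 1 < m)) +
      #(P.filter (fun p : ℕ × ℕ => ¬ p.2 + 1 < m)) = #P :=
    Finset.card_filter_add_card_filter_not (fun p : ℕ × ℕ => p.2 + 1 < m)
  have e1 : P.filter (fun p => p.2 + 1 < m) = ((range m ×ˢ range m).filter
      (fun p => p.1 < p.2 ∧ p.2 + 1 < m ∧ w' (p.2 + 1) < w' p.1 ∧ w' p.1 < w' p.2)) := by
    ext p
    simp only [hP, Finset.mem_filter, Finset.mem_product, Finset.mem_range]
    constructor
    · rintro ⟨⟨⟨h1, h2⟩, h3, h4, h5, h6⟩, h7⟩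
      refine ⟨⟨by omega, by omega⟩, h3, h7, ?_, ?_⟩
      · exact (key _ _ (by omega) (by omega)).mp h5
      · exact (key _ _ (by omega) (by omega)).mp h6
    · rintro ⟨⟨h1, h2⟩, h3, h4, h5, h6⟩
      refine ⟨⟨⟨by omega, by omega⟩, h3, by omega, ?_, ?_⟩, h4⟩
      · exact (key _ _ (by omega) (by omega)).mpr h5
      · exact (key _ _ (by omega) (by omega)).mpr h6
  set v := w' (m - 1) with hv
  have e2 : (P.filter (fun p => ¬ p.2 + 1 < m)).card = (Ico T v).card := by
    apply Finset.card_bij (fun p _ => w' p.1)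
    · intro p hp
      simp only [hP, Finset.mem_filter, Finset.mem_product, Finset.mem_range] at hp
      obtain ⟨⟨⟨h1, h2⟩, h3, h4, h5, h6⟩, h7⟩ := hp
      have hp2 : p.2 = m - 1 := by omega
      have hp1 : p.1 < m := by omega
      rw [Finset.mem_Ico]
      constructor
      · exact (keyT _ hp1).mp (by rw [← hwm]; convert h5 using 2; omega)
      · rw [hv, ← hp2]
        exact (key _ _ hp1 (by omega)).mp h6
    · intro p hp q hq hpq
      simp only [hP, Finset.mem_filter, Finset.mem_product, Finset.mem_range] at hp hq
      have : p.1 = q.1 := hinj _ _ (by omega) (by omega) hpq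
      have : p.2 = q.2 := by omega
      exact Prod.ext ‹p.1 = q.1› this
    · intro x hx
      rw [Finset.mem_Ico] at hx
      have hvm : v ≤ m := (hmem _ (by omega)).2
      obtain ⟨j, hj, hwj⟩ := hsurj x (by omega) (by omega)
      have hjne : j ≠ m - 1 := by
        intro h; rw [h] at hwj; rw [← hv] at hwj; omega
      refine ⟨(j, m - 1), ?_, hwj⟩
      simp only [hP, Finset.mem_filter, Finset.mem_product, Finset.mem_range]
      refine ⟨⟨⟨by omega, by omega⟩, by omega, by omega, ?_, ?_⟩, by omega⟩
      · have : m - 1 + 1 = m := by omega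
        rw [this, hwm]
        exact (keyT _ hj).mpr (by omega)
      · exact (key _ _ hj (by omega)).mpr (by omega)
  rw [bcaCount, ← hP, ← h12, e1, e2, bcaCount, Nat.card_Ico]

lemma peel (m t : ℕ) (hm : 1 ≤ m) (ht1 : 1 ≤ t) (ht2 : t ≤ m + 1) :
    H (m + 1) t = ∑ v ∈ Icc 1 m, (X : Polynomial ℤ) ^ (v - t) * H m v := by
  have hrhs : ∑ v ∈ Icc 1 m, (X : Polynomial ℤ) ^ (v - t) * H m v
      = ∑ σ : Equiv.Perm (Fin m),
          (X : Polynomial ℤ) ^ (bcaCount (toWord m σ) m + (toWord m σ (m - 1) - t)) := by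
    rw [← Finset.sum_fiberwise_of_maps_to (g := fun σ : Equiv.Perm (Fin m) => toWord m σ (m - 1))
        (t := Icc 1 m) ?_]
    · refine Finset.sum_congr rfl fun v hv => ?_
      rw [H, Finset.mul_sum]
      refine Finset.sum_congr rfl fun σ hσ => ?_
      have hσv : toWord m σ (m - 1) = v := (Finset.mem_filter.mp hσ).2
      rw [hσv, pow_add, mul_comm]
    · intro σ _
      have h : m - 1 < m := by omega
      simp only [toWord, dif_pos h, mem_Icc]
      have := (σ ⟨m - 1, h⟩).isLt
      omega
  rw [hrhs, H]
  set tf : Fin (m + 1) := ⟨t - 1, by omega⟩ with htf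
  have hval : ∀ z : Fin m, ((tf.succAbove z : Fin (m + 1)) : ℕ)
      = if (z : ℕ) + 1 < t then (z : ℕ) else (z : ℕ) + 1 := by
    intro z
    rcases Nat.lt_or_ge ((z : ℕ) + 1) t with h | h
    · rw [if_pos h, Fin.succAbove_of_castSucc_lt _ _ ?_]
      · rfl
      · rw [Fin.lt_def]
        show (z : ℕ) < t - 1
        omega
    · rw [if_neg (by omega), Fin.succAbove_of_le_castSucc _ _ ?_]
      · rfl
      · rw [Fin.le_def]
        show t - 1 ≤ (z : ℕ)
        omega
  set i : Equiv.Perm (Fin (m + 1)) → Equiv.Perm (Fin m) := fun π =>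
    Equiv.removeNone (finSuccEquivLast.symm.trans (π.trans (finSuccEquiv' tf))) with hi
  set j : Equiv.Perm (Fin m) → Equiv.Perm (Fin (m + 1)) := fun σ =>
    finSuccEquivLast.trans ((Equiv.optionCongr σ).trans (finSuccEquiv' tf).symm) with hj
  have fact1 : ∀ σ y, (j σ) (Fin.castSucc y) = tf.succAbove (σ y) := by
    intro σ y
    simp [hj, Equiv.trans_apply]
  have fact2 : ∀ σ, (j σ) (Fin.last m) = tf := by
    intro σ
    simp [hj, Equiv.trans_apply]
  have fact3 : ∀ (π : Equiv.Perm (Fin (m + 1))), π (Fin.last m) = tf →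
      ∀ y, π (Fin.castSucc y) = tf.succAbove ((i π) y) := by
    intro π hπ y
    set e := finSuccEquivLast.symm.trans (π.trans (finSuccEquiv' tf)) with he
    have hey : e (some y) = finSuccEquiv' tf (π (Fin.castSucc y)) := by
      simp [he, Equiv.trans_apply]
    have hne : π (Fin.castSucc y) ≠ tf := by
      intro hcon
      have : Fin.castSucc y = Fin.last m := π.injective (hcon.trans hπ.symm)
      exact absurd this (Fin.castSucc_lt_last y).ne
    obtain ⟨z, hz⟩ : ∃ z, finSuccEquiv' tf (π (Fin.castSucc y)) = some z := by
      rcases h' : finSuccEquiv' tf (π (Fin.castSucc y)) with _ | z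
      · exact absurd ((finSuccEquiv' tf).injective (h'.trans (finSuccEquiv'_at tf).symm)) hne
      · exact ⟨z, rfl⟩
    have hr : some ((i π) y) = e (some y) :=
      Equiv.removeNone_some e ⟨z, by rw [hey, hz]⟩
    apply (finSuccEquiv' tf).injective
    rw [finSuccEquiv'_succAbove, ← hey, ← hr]
  refine Finset.sum_nbij' i j ?_ ?_ ?_ ?_ ?_
  · intro π _; exact Finset.mem_univ _
  · intro σ _
    simp only [Finset.mem_filter, Finset.mem_univ, true_and]; simp only [toWord]
    rw [dif_pos (by omega : m + 1 - 1 < m + 1)]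
    have : (⟨m + 1 - 1, by omega⟩ : Fin (m + 1)) = Fin.last m := by
      apply Fin.ext; simp
    rw [this, fact2]
    simp only [htf]
    omega
  · intro π hπ
    simp only [Finset.mem_filter, Finset.mem_univ, true_and] at hπ; simp only [toWord] at hπ
    rw [dif_pos (by omega : m + 1 - 1 < m + 1)] at hπ
    have hlast : π (Fin.last m) = tf := by
      apply Fin.ext
      have : (⟨m + 1 - 1, by omega⟩ : Fin (m + 1)) = Fin.last m := by
        apply Fin.ext; simp
      rw [this] at hπ
      simp only [htf]
      omega
    apply Equiv.ext
    intro x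
    induction x using Fin.lastCases with
    | last => rw [fact2, hlast]
    | cast y => rw [fact1, ← fact3 π hlast y]
  · intro σ _
    apply Equiv.ext
    intro y
    have h1 := fact3 (j σ) (fact2 σ) y
    rw [fact1] at h1
    exact (Fin.succAbove_right_injective h1).symm
  · intro π hπ
    simp only [Finset.mem_filter, Finset.mem_univ, true_and] at hπ; simp only [toWord] at hπ
    rw [dif_pos (by omega : m + 1 - 1 < m + 1)] at hπ
    have hlast : π (Fin.last m) = tf := by
      apply Fin.ext
      have : (⟨m + 1 - 1, by omega⟩ : Fin (m + 1)) = Fin.last m := by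
        apply Fin.ext; simp
      rw [this] at hπ
      simp only [htf]
      omega
    congr 1
    apply bca_split m hm _ _ t ht1
    · intro k hk
      have hk1 : k < m + 1 := by omega
      simp only [toWord, dif_pos hk1, dif_pos hk]
      have hcs : (⟨k, hk1⟩ : Fin (m + 1)) = Fin.castSucc ⟨k, hk⟩ := rfl
      rw [hcs, fact3 π hlast]
      rw [hval]
      split_ifs <;> omega
    · simp only [toWord, dif_pos (by omega : m < m + 1)]
      have : (⟨m, by omega⟩ : Fin (m + 1)) = Fin.last m := rfl
      rw [this, hlast]
      simp only [htf]
      omega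
    · intro k hk
      simp only [toWord, dif_pos hk]
      have := ((i π) ⟨k, hk⟩).isLt
      omega
    · intro k l hk hl hkl
      simp only [toWord, dif_pos hk, dif_pos hl] at hkl
      have : (i π) ⟨k, hk⟩ = (i π) ⟨l, hl⟩ := Fin.ext (by omega)
      have := (i π).injective this
      exact Fin.mk.inj_iff.mp this
    · intro x hx1 hx2
      refine ⟨((i π).symm ⟨x - 1, by omega⟩ : Fin m), Fin.isLt _, ?_⟩
      simp only [toWord, dif_pos (Fin.isLt _)]
      have : (⟨((i π).symm ⟨x - 1, by omega⟩ : Fin m), Fin.isLt _⟩ : Fin m)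
          = (i π).symm ⟨x - 1, by omega⟩ := Fin.ext rfl
      rw [this, Equiv.apply_symm_apply]
      show x - 1 + 1 = x
      omega

lemma sort_image_add_one (S : Finset ℕ) :
    (S.image (· + 1)).sort (· ≤ ·) = (S.sort (· ≤ ·)).map (· + 1) := by
  have h1 : S.image (· + 1) = S.map ⟨(· + 1), add_left_injective 1⟩ := by
    rw [Finset.map_eq_image]
    rfl
  rw [h1]
  show Multiset.sort (Multiset.map (fun x => x + 1) S.val) (· ≤ ·) = _
  rw [← Multiset.map_sort (r := (· ≤ ·)) (r' := (· ≤ ·)) (f := fun x => x + 1) (s := S.val) (hs := fun a _ b _ => by show a ≤ b ↔ a + 1 ≤ b + 1; omega)]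
  rfl

lemma gapProd_insert (t : ℕ) (S' : Finset ℕ) (hne : S'.Nonempty)
    (hgt : ∀ x ∈ S', t ≤ x) :
    gapProd (insert t (S'.image (· + 1))) =
      ((X : Polynomial ℤ) ^ (S'.min' hne - t) - 1) * gapProd S' := by
  have hnotmem : t ∉ S'.image (· + 1) := by
    intro hmem
    obtain ⟨x, hx, hxe⟩ := Finset.mem_image.mp hmem
    have := hgt x hx
    omega
  have hle : ∀ b ∈ S'.image (· + 1), t ≤ b := by
    intro b hb
    simp only [Finset.mem_image] at hb
    obtain ⟨x, hx, rfl⟩ := hb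
    have := hgt x hx
    omega
  have hsort : (insert t (S'.image (· + 1))).sort (· ≤ ·)
      = t :: (S'.sort (· ≤ ·)).map (· + 1) := by
    rw [Finset.sort_insert (· ≤ ·) hle hnotmem, sort_image_add_one]
  have hcardim : (S'.image (· + 1)).card = S'.card :=
    Finset.card_image_of_injective _ (add_left_injective 1)
  have hcardins : (insert t (S'.image (· + 1))).card = S'.card + 1 := by
    rw [Finset.card_insert_of_notMem hnotmem, hcardim]
  obtain ⟨c, hc⟩ : ∃ c, S'.card = c + 1 := by
    rcases Nat.exists_eq_add_of_le (Finset.card_pos.mpr hne) with ⟨c, hcc⟩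
    exact ⟨c, by omega⟩
  set M := S'.sort (· ≤ ·) with hM
  have hMlen : M.length = c + 1 := by rw [hM, Finset.length_sort, hc]
  have getDmap : ∀ i, i < c + 1 → (M.map (· + 1)).getD i 0 = M.getD i 0 + 1 := by
    intro i hi
    have h1 : i < (M.map (· + 1)).length := by rw [List.length_map]; omega
    have h2 : i < M.length := by omega
    rw [List.getD_eq_getElem _ _ h1, List.getD_eq_getElem _ _ h2, List.getElem_map]
  have hmin : M.getD 0 0 = S'.min' hne := by
    have h0 : 0 < M.length := by omega
    rw [List.getD_eq_getElem _ _ h0]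
    exact Finset.sorted_zero_eq_min' (h := by rw [← hM]; exact h0)
  rw [gapProd, hcardins, hc]
  have hrange : c + 1 + 1 - 1 = c + 1 := by omega
  rw [hrange, Finset.prod_range_succ']
  have hL : ∀ i, i < c + 1 →
      ((insert t (S'.image (· + 1))).sort (· ≤ ·)).getD (i + 1) 0 = M.getD i 0 + 1 := by
    intro i hi
    rw [hsort, List.getD_cons_succ]
    exact getDmap i hi
  have hL0 : ((insert t (S'.image (· + 1))).sort (· ≤ ·)).getD 0 0 = t := by
    rw [hsort]
    rfl
  rw [hL 0 (by omega), hL0, hmin]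
  have e0 : S'.min' hne + 1 - t - 1 = S'.min' hne - t := by omega
  rw [e0, mul_comm]
  congr 1
  rw [gapProd, hc]
  have : c + 1 - 1 = c := by omega
  rw [this]
  refine Finset.prod_congr rfl fun i hi => ?_
  rw [Finset.mem_range] at hi
  rw [hL (i + 1) (by omega), hL i (by omega)]
  have e : M.getD (i + 1) 0 + 1 - (M.getD i 0 + 1) - 1 = M.getD (i + 1) 0 - M.getD i 0 - 1 := by
    omega
  rw [e]

lemma untop'_min (S : Finset ℕ) (hS : S.Nonempty) : S.min.untopD 0 = S.min' hS := by
  rw [← Finset.coe_min' hS]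
  rfl

lemma a_eq (n k : ℕ) : a n k = ∑ S ∈ (Finset.Icc 1 n).powersetCard k, gapProd S := by
  rw [a]
  refine Finset.sum_congr rfl fun S hS => ?_
  have hcard : S.card = k := (Finset.mem_powersetCard.mp hS).2
  rw [gapProd, hcard, ← Finset.prod_range_reflect]
  refine Finset.prod_congr rfl fun j hj => ?_
  rw [Finset.mem_range] at hj
  have e1 : k - (k - 1 - 1 - j) - 1 = j + 1 := by omega
  have e2 : k - (k - 1 - 1 - j) - 2 = j := by omega
  rw [e1, e2]

lemma a_split (n k : ℕ) (hk : 1 ≤ k) : a n k = ∑ t ∈ Icc 1 n, A n k t := by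
  rw [a_eq]
  rw [← Finset.sum_fiberwise_of_maps_to (g := fun S : Finset ℕ => S.min.untopD 0)
      (t := Icc 1 n) ?_]
  · refine Finset.sum_congr rfl fun t _ => ?_
    rw [A]
    apply Finset.sum_congr _ fun _ _ => rfl
    apply Finset.filter_congr
    intro S hS
    have hne : S.Nonempty := by
      rw [← Finset.card_pos, (Finset.mem_powersetCard.mp hS).2]; omega
    have hsub := (Finset.mem_powersetCard.mp hS).1
    rw [untop'_min S hne]
    constructor
    · rintro rfl
      exact ⟨Finset.min'_mem _ _, fun x hx => Finset.min'_le _ _ hx⟩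
    · rintro ⟨h1, h2⟩
      exact le_antisymm (Finset.min'_le _ _ h1) (Finset.le_min' _ _ _ h2)
  · intro S hS
    have hne : S.Nonempty := by
      rw [← Finset.card_pos, (Finset.mem_powersetCard.mp hS).2]; omega
    have hsub := (Finset.mem_powersetCard.mp hS).1
    show S.min.untopD 0 ∈ Icc 1 n
    rw [untop'_min S hne]
    exact hsub (Finset.min'_mem _ _)

lemma A_one (n t : ℕ) (ht1 : 1 ≤ t) (ht2 : t ≤ n) : A n 1 t = 1 := by
  rw [A]
  have : ((Finset.Icc 1 n).powersetCard 1).filter (fun S => t ∈ S ∧ ∀ x ∈ S, t ≤ x)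
      = {{t}} := by
    ext S
    simp only [Finset.mem_filter, Finset.mem_powersetCard, Finset.mem_singleton]
    constructor
    · rintro ⟨⟨hsub, hcard⟩, hmem, _⟩
      obtain ⟨x, rfl⟩ := Finset.card_eq_one.mp hcard
      rw [Finset.mem_singleton] at hmem
      rw [hmem]
    · rintro rfl
      refine ⟨⟨?_, Finset.card_singleton t⟩, Finset.mem_singleton_self t, ?_⟩
      · intro x hx
        rw [Finset.mem_singleton] at hx
        subst hx
        rw [Finset.mem_Icc]
        exact ⟨ht1, ht2⟩
      · intro x hx
        rw [Finset.mem_singleton] at hx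
        omega
  rw [this, Finset.sum_singleton, gapProd]
  simp

lemma A_rec (m k t : ℕ) (hk : 2 ≤ k) (ht : 1 ≤ t) :
    A (m + 1) k t = ∑ v ∈ Icc t m, ((X : Polynomial ℤ) ^ (v - t) - 1) * A m (k - 1) v := by
  have hrhs : ∑ v ∈ Icc t m, ((X : Polynomial ℤ) ^ (v - t) - 1) * A m (k - 1) v
      = ∑ p ∈ (Icc t m).sigma (fun v => ((Finset.Icc 1 m).powersetCard (k - 1)).filter
          (fun S => v ∈ S ∧ ∀ x ∈ S, v ≤ x)),
        ((X : Polynomial ℤ) ^ (p.1 - t) - 1) * gapProd p.2 := by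
    rw [Finset.sum_sigma]
    refine Finset.sum_congr rfl fun v _ => ?_
    rw [A, Finset.mul_sum]
  rw [hrhs, A]
  refine Finset.sum_nbij'
    (fun S => ⟨((S.erase t).image (· - 1)).min.untopD 0, (S.erase t).image (· - 1)⟩)
    (fun p => insert t (p.2.image (· + 1))) ?_ ?_ ?_ ?_ ?_
  · -- forward membership
    intro S hS
    simp only [Finset.mem_filter, Finset.mem_powersetCard] at hS
    obtain ⟨⟨hsub, hcard⟩, htS, hlb⟩ := hS
    have hE1 : ∀ x ∈ S.erase t, t + 1 ≤ x := by
      intro x hx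
      have h1 := Finset.mem_of_mem_erase hx
      have h2 := Finset.ne_of_mem_erase hx
      have := hlb x h1
      omega
    have hS'card : ((S.erase t).image (· - 1)).card = k - 1 := by
      rw [Finset.card_image_of_injOn, Finset.card_erase_of_mem htS, hcard]
      intro x hx y hy hxy
      have hxy' : x - 1 = y - 1 := hxy
      have := hE1 x hx
      have := hE1 y hy
      omega
    have hS'ne : ((S.erase t).image (· - 1)).Nonempty := by
      rw [← Finset.card_pos, hS'card]
      omega
    have hS'lb : ∀ y ∈ (S.erase t).image (· - 1), t ≤ y := by
      intro y hy
      obtain ⟨x, hx, rfl⟩ := Finset.mem_image.mp hy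
      have := hE1 x hx
      omega
    have hS'sub : (S.erase t).image (· - 1) ⊆ Icc 1 m := by
      intro y hy
      obtain ⟨x, hx, rfl⟩ := Finset.mem_image.mp hy
      have h1 := hE1 x hx
      have h2 := hsub (Finset.mem_of_mem_erase hx)
      rw [Finset.mem_Icc] at h2 ⊢
      omega
    rw [Finset.mem_sigma]
    dsimp only
    constructor
    · rw [untop'_min _ hS'ne, Finset.mem_Icc]
      have h1 := Finset.min'_mem _ hS'ne
      have h2 := hS'lb _ h1
      have h3 := hS'sub h1
      rw [Finset.mem_Icc] at h3
      omega
    · rw [Finset.mem_filter, Finset.mem_powersetCard]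
      refine ⟨⟨hS'sub, hS'card⟩, ?_, ?_⟩
      · rw [untop'_min _ hS'ne]
        exact Finset.min'_mem _ hS'ne
      · rw [untop'_min _ hS'ne]
        intro x hx
        exact Finset.min'_le _ _ hx
  · -- backward membership
    rintro ⟨v, S'⟩ hp
    rw [Finset.mem_sigma] at hp
    obtain ⟨hv, hS'⟩ := hp
    rw [Finset.mem_Icc] at hv
    rw [Finset.mem_filter, Finset.mem_powersetCard] at hS'
    obtain ⟨⟨hsub, hcard⟩, hvS', hlb⟩ := hS'
    have hnotmem : t ∉ S'.image (· + 1) := by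
      intro hmem
      obtain ⟨x, hx, hxe⟩ := Finset.mem_image.mp hmem
      have := hlb x hx
      omega
    rw [Finset.mem_filter, Finset.mem_powersetCard]
    refine ⟨⟨?_, ?_⟩, Finset.mem_insert_self _ _, ?_⟩
    · intro y hy
      rcases Finset.mem_insert.mp hy with rfl | hy'
      · rw [Finset.mem_Icc]
        omega
      · obtain ⟨x, hx, rfl⟩ := Finset.mem_image.mp hy'
        have := hsub hx
        rw [Finset.mem_Icc] at this ⊢
        omega
    · rw [Finset.card_insert_of_notMem hnotmem,
        Finset.card_image_of_injective _ (add_left_injective 1), hcard]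
      omega
    · intro y hy
      rcases Finset.mem_insert.mp hy with rfl | hy'
      · exact le_rfl
      · obtain ⟨x, hx, rfl⟩ := Finset.mem_image.mp hy'
        have h1 := hlb x hx
        omega
  · -- left inverse
    intro S hS
    simp only [Finset.mem_filter, Finset.mem_powersetCard] at hS
    obtain ⟨⟨hsub, hcard⟩, htS, hlb⟩ := hS
    have hE1 : ∀ x ∈ S.erase t, t + 1 ≤ x := by
      intro x hx
      have h1 := Finset.mem_of_mem_erase hx
      have h2 := Finset.ne_of_mem_erase hx
      have := hlb x h1
      omega
    show insert t (((S.erase t).image (· - 1)).image (· + 1)) = S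
    rw [Finset.image_image]
    have : (S.erase t).image ((· + 1) ∘ (· - 1)) = S.erase t := by
      rw [Finset.image_congr (g := id), Finset.image_id]
      intro x hx
      have := hE1 x hx
      show x - 1 + 1 = x
      omega
    rw [this, Finset.insert_erase htS]
  · -- right inverse
    rintro ⟨v, S'⟩ hp
    rw [Finset.mem_sigma] at hp
    obtain ⟨hv, hS'⟩ := hp
    rw [Finset.mem_Icc] at hv
    rw [Finset.mem_filter, Finset.mem_powersetCard] at hS'
    obtain ⟨⟨hsub, hcard⟩, hvS', hlb⟩ := hS'
    have hnotmem : t ∉ S'.image (· + 1) := by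
      intro hmem
      obtain ⟨x, hx, hxe⟩ := Finset.mem_image.mp hmem
      have := hlb x hx
      omega
    have he : (insert t (S'.image (· + 1))).erase t = S'.image (· + 1) :=
      Finset.erase_insert hnotmem
    have he2 : ((insert t (S'.image (· + 1))).erase t).image (· - 1) = S' := by
      rw [he, Finset.image_image]
      rw [Finset.image_congr (g := id), Finset.image_id]
      intro x hx
      show x + 1 - 1 = x
      omega
    dsimp only
    have hS'ne : S'.Nonempty := ⟨v, hvS'⟩
    have hminv : (((insert t (S'.image (· + 1))).erase t).image (· - 1)).min.untopD 0 = v := by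
      rw [he2, untop'_min _ hS'ne]
      exact le_antisymm (Finset.min'_le _ _ hvS') (Finset.le_min' _ _ _ hlb)
    exact Sigma.ext hminv (heq_of_eq he2)
  · -- summand equality
    intro S hS
    simp only [Finset.mem_filter, Finset.mem_powersetCard] at hS
    obtain ⟨⟨hsub, hcard⟩, htS, hlb⟩ := hS
    have hE1 : ∀ x ∈ S.erase t, t + 1 ≤ x := by
      intro x hx
      have h1 := Finset.mem_of_mem_erase hx
      have h2 := Finset.ne_of_mem_erase hx
      have := hlb x h1
      omega
    have hS'card : ((S.erase t).image (· - 1)).card = k - 1 := by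
      rw [Finset.card_image_of_injOn, Finset.card_erase_of_mem htS, hcard]
      intro x hx y hy hxy
      have hxy' : x - 1 = y - 1 := hxy
      have := hE1 x hx
      have := hE1 y hy
      omega
    have hS'ne : ((S.erase t).image (· - 1)).Nonempty := by
      rw [← Finset.card_pos, hS'card]
      omega
    have hS'lb : ∀ y ∈ (S.erase t).image (· - 1), t ≤ y := by
      intro y hy
      obtain ⟨x, hx, rfl⟩ := Finset.mem_image.mp hy
      have := hE1 x hx
      omega
    have hSid : S = insert t (((S.erase t).image (· - 1)).image (· + 1)) := by
      rw [Finset.image_image]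
      have : (S.erase t).image ((· + 1) ∘ (· - 1)) = S.erase t := by
        rw [Finset.image_congr (g := id), Finset.image_id]
        intro x hx
        have := hE1 x hx
        show x - 1 + 1 = x
        omega
      rw [this, Finset.insert_erase htS]
    dsimp only
    conv_lhs => rw [hSid]
    rw [gapProd_insert t _ hS'ne hS'lb]
    rw [untop'_min _ hS'ne]

lemma H_eq : ∀ n, 1 ≤ n → ∀ t, 1 ≤ t → t ≤ n →
    H n t = ∑ k ∈ Icc 1 n, A n k t * F (n - k) := by
  intro n hn
  induction n, hn using Nat.le_induction with
  | base =>
    intro t ht1 ht2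
    have : t = 1 := by omega
    subst this
    rw [H_one]
    rw [show Icc 1 1 = {1} from rfl]
    rw [Finset.sum_singleton, A_one 1 1 le_rfl le_rfl, F_zero]
    ring
  | succ m hm IH =>
    intro t ht1 ht2
    rw [peel m t hm ht1 ht2]
    have hIH : ∀ v ∈ Icc 1 m, H m v = ∑ k ∈ Icc 1 m, A m k v * F (m - k) := by
      intro v hv
      rw [Finset.mem_Icc] at hv
      exact IH v hv.1 hv.2
    -- split RHS
    have h1mem : (1 : ℕ) ∈ Icc 1 (m + 1) := by rw [Finset.mem_Icc]; omega
    rw [← Finset.add_sum_erase _ _ h1mem]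
    have herase : (Icc 1 (m + 1)).erase 1 = Icc 2 (m + 1) := by
      rw [Finset.Icc_erase_left, ← Finset.Icc_add_one_left_eq_Ioc]
      rfl
    rw [herase]
    have hmap : ∑ k ∈ Icc 2 (m + 1), A (m + 1) k t * F (m + 1 - k)
        = ∑ k ∈ Icc 1 m, A (m + 1) (k + 1) t * F (m - k) := by
      rw [show (2 : ℕ) = 1 + 1 from rfl, show m + 1 = m + 1 from rfl]
      rw [← Finset.map_add_right_Icc 1 m 1, Finset.sum_map]
      refine Finset.sum_congr rfl fun k hk => ?_
      have : m + 1 - (k + 1) = m - k := by omega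
      rw [addRightEmbedding_apply, this]
    rw [hmap]
    have hA1 : A (m + 1) 1 t = 1 := A_one _ _ ht1 ht2
    rw [hA1, one_mul]
    have hrec : ∑ k ∈ Icc 1 m, A (m + 1) (k + 1) t * F (m - k)
        = ∑ v ∈ Icc t m, ((X : Polynomial ℤ) ^ (v - t) - 1)
            * ∑ k ∈ Icc 1 m, A m k v * F (m - k) := by
      have step : ∀ k ∈ Icc 1 m, A (m + 1) (k + 1) t * F (m - k)
          = ∑ v ∈ Icc t m, (((X : Polynomial ℤ) ^ (v - t) - 1) * (A m k v * F (m - k))) := by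
        intro k hk
        rw [Finset.mem_Icc] at hk
        rw [A_rec m (k + 1) t (by omega) ht1]
        have hk1 : k + 1 - 1 = k := rfl
        rw [hk1, Finset.sum_mul]
        exact Finset.sum_congr rfl fun v _ => by ring
      rw [Finset.sum_congr rfl step, Finset.sum_comm]
      exact Finset.sum_congr rfl fun v _ => (Finset.mul_sum _ _ _).symm
    rw [hrec, Nat.add_sub_cancel, F_eq_sum_H hm]
    have hext : ∑ v ∈ Icc t m, ((X : Polynomial ℤ) ^ (v - t) - 1)
            * ∑ k ∈ Icc 1 m, A m k v * F (m - k)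
        = ∑ v ∈ Icc 1 m, ((X : Polynomial ℤ) ^ (v - t) - 1)
            * ∑ k ∈ Icc 1 m, A m k v * F (m - k) := by
      apply Finset.sum_subset (Finset.Icc_subset_Icc ht1 le_rfl)
      intro v hv hnot
      rw [Finset.mem_Icc] at hv hnot
      have : v - t = 0 := by omega
      rw [this, pow_zero, sub_self, zero_mul]
    rw [hext, ← Finset.sum_add_distrib]
    refine Finset.sum_congr rfl fun v hv => ?_
    rw [hIH v hv]
    ring

theorem bca_distribution_recurrence :
    F 0 = 1 ∧ ∀ n, 1 ≤ n → F n = ∑ k ∈ Icc 1 n, a n k * F (n - k) := by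
  refine ⟨F_zero, fun n hn => ?_⟩
  rw [F_eq_sum_H hn]
  have hH : ∀ t ∈ Icc 1 n, H n t = ∑ k ∈ Icc 1 n, A n k t * F (n - k) := by
    intro t ht
    rw [Finset.mem_Icc] at ht
    exact H_eq n hn t ht.1 ht.2
  rw [Finset.sum_congr rfl hH, Finset.sum_comm]
  refine Finset.sum_congr rfl fun k hk => ?_
  rw [Finset.mem_Icc] at hk
  rw [a_split n k hk.1, Finset.sum_mul]
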